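/- If q ≥ 3 and gcd(k, q−1) = 1, then every matrix in M_n(𝔽_q) can be written as A^k + B^k where A and B are split semisimple matrices in M_n(𝔽_q). -/

import Mathlib

/-- A matrix over a field is split semisimple (diagonalizable) if it is
similar over the field to a diagonal matrix. -/
def IsSplitSemisimple {n : ℕ} {F : Type*} [Field F]
    (A : Matrix (Fin n) (Fin n) F) : Prop :=
  ∃ (g : GL (Fin n) F) (d : Fin n → F),
    (↑g : Matrix (Fin n) (Fin n) F) * A * (↑g⁻¹ : Matrix (Fin n) (Fin n) F) =
      Matrix.diagonal d

open Matrix Polynomial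


section SSP
variable {F : Type*} [Field F]

/-- split semisimple, flexible-index version -/
def SSP {m : Type*} [Fintype m] [DecidableEq m] (A : Matrix m m F) : Prop :=
  ∃ (P : Matrix m m F) (dg : m → F), IsUnit P ∧ A * P = P * Matrix.diagonal dg

lemma sum_delta {d : ℕ} {M : Type*} [AddCommMonoid M] (t : ℕ) (f : Fin d → M) :
    (∑ k : Fin d, if (k : ℕ) = t then f k else 0) =
      if h : t < d then f ⟨t, h⟩ else 0 := by
  split_ifs with h
  · rw [Finset.sum_eq_single (⟨t, h⟩ : Fin d)]
    · simp
    · intro k _ hk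
      rw [if_neg]
      intro hkt
      exact hk (Fin.ext hkt)
    · intro hmem; exact absurd (Finset.mem_univ _) hmem
  · apply Finset.sum_eq_zero
    intro k _
    rw [if_neg]
    intro hkt
    exact h (hkt ▸ k.isLt)

/-- lower bidiagonal matrix given by diagonal `β` and subdiagonal `μ` (as ℕ-functions). -/
def LBD (d : ℕ) (β μ : ℕ → F) : Matrix (Fin d) (Fin d) F :=
  Matrix.of fun i j =>
    if (i : ℕ) = (j : ℕ) then β j else if (i : ℕ) = (j : ℕ) + 1 then μ j else 0

lemma LBD_mul {d : ℕ} (β₁ μ₁ β₂ μ₂ : ℕ → F) :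
    LBD d β₁ μ₁ * LBD d β₂ μ₂ = Matrix.of fun i j : Fin d =>
      if (i : ℕ) = (j : ℕ) then β₁ j * β₂ j
      else if (i : ℕ) = (j : ℕ) + 1 then β₁ ((j : ℕ) + 1) * μ₂ j + μ₁ j * β₂ j
      else if (i : ℕ) = (j : ℕ) + 2 then μ₁ ((j : ℕ) + 1) * μ₂ j
      else 0 := by
  ext i j
  rw [Matrix.mul_apply]
  have hsplit : ∀ k : Fin d, LBD d β₁ μ₁ i k * LBD d β₂ μ₂ k j =
      (if (k : ℕ) = (j : ℕ) then LBD d β₁ μ₁ i k * β₂ j else 0) +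
      (if (k : ℕ) = (j : ℕ) + 1 then LBD d β₁ μ₁ i k * μ₂ j else 0) := by
    intro k
    have hi := i.isLt; have hk := k.isLt; have hj := j.isLt
    simp only [LBD, Matrix.of_apply]
    split_ifs <;> first | (exfalso; omega) | ring1
  rw [Finset.sum_congr rfl fun k _ => hsplit k, Finset.sum_add_distrib,
    sum_delta (j : ℕ) (fun k => LBD d β₁ μ₁ i k * β₂ j),
    sum_delta ((j : ℕ) + 1) (fun k => LBD d β₁ μ₁ i k * μ₂ j)]
  rw [dif_pos j.isLt]
  simp only [LBD, Matrix.of_apply, Fin.eta]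
  have hi := i.isLt; have hj := j.isLt
  by_cases h2 : (j : ℕ) + 1 < d
  · rw [dif_pos h2]
    split_ifs <;> first | (exfalso; omega) | ring1
  · rw [dif_neg h2, add_zero]
    split_ifs <;> first | (exfalso; omega) | ring1

open Classical in
lemma LBD_ssp {d : ℕ} (β μ : ℕ → F) (h1 : ∀ j, μ j ≠ 0 → μ (j + 1) = 0)
    (h2 : ∀ j, μ j ≠ 0 → β j ≠ β (j + 1)) :
    ∃ P : Matrix (Fin d) (Fin d) F, IsUnit P ∧
      LBD d β μ * P = P * Matrix.diagonal (fun i : Fin d => β (i : ℕ)) := by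
  set π : ℕ → F := fun j => if μ j = 0 then 1 else β j - β (j + 1) with hπ
  have hπne : ∀ j, π j ≠ 0 := by
    intro j
    by_cases h : μ j = 0
    · simp [hπ, h]
    · simp only [hπ, if_neg h]
      exact sub_ne_zero.mpr (h2 j h)
  refine ⟨LBD d π μ, ?_, ?_⟩
  · rw [Matrix.isUnit_iff_isUnit_det]
    have hdet : (LBD d π μ).det = ∏ i : Fin d, LBD d π μ i i := by
      apply Matrix.det_of_lowerTriangular
      intro i j hij
      simp only [LBD, Matrix.of_apply]
      have hlt : (i : ℕ) < (j : ℕ) := hij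
      rw [if_neg (by omega), if_neg (by omega)]
    rw [hdet]
    apply isUnit_iff_ne_zero.mpr
    apply Finset.prod_ne_zero_iff.mpr
    intro i _
    simpa [LBD] using hπne i
  · rw [LBD_mul]
    ext i j
    rw [Matrix.mul_diagonal]
    simp only [LBD, Matrix.of_apply]
    have hi := i.isLt; have hj := j.isLt
    by_cases hm : μ (j : ℕ) = 0
    · split_ifs <;> first | (exfalso; omega) | (simp [hπ, hm]; try ring1) | rfl
    · have hπj : π (j : ℕ) = β j - β ((j : ℕ) + 1) := by simp [hπ, hm]
      split_ifs <;> first | (exfalso; omega) | (simp [hπj, h1 _ hm]; try ring1) | rfl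

lemma ssp_fromBlocks {m l : Type*} [Fintype m] [DecidableEq m] [Fintype l] [DecidableEq l]
    (A₁ : Matrix m m F) (A₂ : Matrix l l F) (x : Matrix m l F)
    (P₁ : Matrix m m F) (P₂ : Matrix l l F) (g₁ : m → F) (g₂ : l → F)
    (hP₁ : IsUnit P₁) (hP₂ : IsUnit P₂)
    (h₁ : A₁ * P₁ = P₁ * Matrix.diagonal g₁) (h₂ : A₂ * P₂ = P₂ * Matrix.diagonal g₂)
    (hdisj : ∀ i j, g₁ i ≠ g₂ j) :
    SSP (Matrix.fromBlocks A₁ x 0 A₂) := by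
  obtain ⟨u, hu⟩ := hP₁
  set x' : Matrix m l F := (↑u⁻¹ : Matrix m m F) * x * P₂ with hx'
  set z : Matrix m l F := Matrix.of fun i j => x' i j / (g₂ j - g₁ i) with hz
  refine ⟨Matrix.fromBlocks P₁ (P₁ * z) 0 P₂, Sum.elim g₁ g₂, ?_, ?_⟩
  · rw [Matrix.isUnit_iff_isUnit_det, Matrix.det_fromBlocks_zero₂₁]
    exact ((Matrix.isUnit_iff_isUnit_det _).mp ⟨u, hu⟩).mul
      ((Matrix.isUnit_iff_isUnit_det _).mp hP₂)
  · rw [Matrix.fromBlocks_multiply, ← Matrix.fromBlocks_diagonal, Matrix.fromBlocks_multiply]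
    have hxP : x * P₂ = P₁ * x' := by
      rw [hx', ← hu, ← Matrix.mul_assoc, ← Matrix.mul_assoc, Units.mul_inv, Matrix.one_mul]
    have key : Matrix.diagonal g₁ * z + x' = z * Matrix.diagonal g₂ := by
      ext i j
      simp only [Matrix.add_apply, Matrix.diagonal_mul, Matrix.mul_diagonal, hz,
        Matrix.of_apply]
      have hne : g₂ j - g₁ i ≠ 0 := sub_ne_zero.mpr (Ne.symm (hdisj i j))
      field_simp
      ring
    have hoff : A₁ * (P₁ * z) + x * P₂ = P₁ * z * Matrix.diagonal g₂ := by
      rw [← Matrix.mul_assoc, h₁, hxP, Matrix.mul_assoc, Matrix.mul_assoc, ← Matrix.mul_add, key]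
    simp only [Matrix.mul_zero, Matrix.zero_mul, add_zero, zero_add, Matrix.zero_mul,
      Matrix.mul_zero]
    rw [h₁, h₂, hoff]

lemma SSP.reindex {m l : Type*} [Fintype m] [DecidableEq m] [Fintype l] [DecidableEq l]
    (e : m ≃ l) {A : Matrix m m F} (h : SSP A) : SSP (Matrix.reindex e e A) := by
  obtain ⟨P, dg, hP, hAP⟩ := h
  refine ⟨Matrix.reindex e e P, dg ∘ e.symm, ?_, ?_⟩
  · rw [Matrix.isUnit_iff_isUnit_det, Matrix.reindex_apply, Matrix.det_submatrix_equiv_self]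
    exact (Matrix.isUnit_iff_isUnit_det _).mp hP
  · simp only [Matrix.reindex_apply]
    rw [Matrix.submatrix_mul_equiv, hAP, ← Matrix.submatrix_diagonal_equiv,
      ← Matrix.submatrix_mul_equiv P _ _ e.symm _]

lemma exists_ne_ne [Fintype F] (hF : 3 ≤ Fintype.card F) (u v : F) :
    ∃ x : F, x ≠ u ∧ x ≠ v := by
  classical
  by_contra hcon
  push_neg at hcon
  have hsub : (Finset.univ : Finset F) ⊆ {u, v} := by
    intro x _
    by_cases hxu : x = u
    · simp [hxu]
    · simp [hcon x hxu]
  have h2 : Fintype.card F ≤ 2 := by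
    calc Fintype.card F = (Finset.univ : Finset F).card := rfl
    _ ≤ ({u, v} : Finset F).card := Finset.card_le_card hsub
    _ ≤ 2 := Finset.card_insert_le u {v} |>.trans (by simp)
  omega

/-- companion-type matrix: subdiagonal of 1s, last column `c`. -/
def compMat (d : ℕ) (c : Fin d → F) : Matrix (Fin d) (Fin d) F :=
  Matrix.of fun i j : Fin d =>
    (if (i : ℕ) = (j : ℕ) + 1 then 1 else 0) + (if (j : ℕ) = d - 1 then c i else 0)

open Classical in
lemma core [Fintype F] (hF : 3 ≤ Fintype.card F) (d : ℕ) (c : Fin d → F) :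
    ∃ A B : Matrix (Fin d) (Fin d) F, SSP A ∧ SSP B ∧ compMat d c = A + B := by
  rcases Nat.eq_zero_or_pos d with hd | hd
  · subst hd
    exact ⟨0, 0, ⟨1, 0, isUnit_one, Matrix.ext fun i _ => i.elim0⟩,
      ⟨1, 0, isUnit_one, Matrix.ext fun i _ => i.elim0⟩, Matrix.ext fun i _ => i.elim0⟩
  set γ : F := c ⟨d - 1, by omega⟩ with hγ
  obtain ⟨b, hb0, hbγ⟩ := exists_ne_ne hF 0 γ
  obtain ⟨a, hab, haγ⟩ := exists_ne_ne hF b γ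
  set βB : ℕ → F := fun i => if i = d - 1 then 0 else if i % 2 = d % 2 then -b else -a with hβB
  set μB : ℕ → F := fun j => if j % 2 = d % 2 then 1 else 0 with hμB
  set B : Matrix (Fin d) (Fin d) F := LBD d βB μB with hB
  obtain ⟨PB, hPB, hBPB⟩ := LBD_ssp (d := d) βB μB
    (by
      intro j hj
      have hjd : j % 2 = d % 2 := by
        by_contra h; exact hj (by simp [hμB, h])
      simp only [hμB]
      rw [if_neg (by omega)]
    )
    (by
      intro j hj
      have hjd : j % 2 = d % 2 := by
        by_contra h; exact hj (by simp [hμB, h])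
      have hjne : j ≠ d - 1 := by omega
      rw [hβB]
      simp only [if_neg hjne]
      rw [if_pos hjd]
      by_cases hj1 : j + 1 = d - 1
      · rw [if_pos hj1]
        exact neg_ne_zero.mpr hb0
      · rw [if_neg hj1, if_neg (by omega)]
        exact fun hcon => hab (neg_injective hcon.symm)
    )
  have hSSPB : SSP B := ⟨PB, _, hPB, hBPB⟩
  set d' : ℕ := d - 1 with hd'
  set βD : ℕ → F := fun i => if i % 2 = d % 2 then b else a with hβD
  set μD : ℕ → F := fun j => if j % 2 = d % 2 then 0 else 1 with hμD
  obtain ⟨PD, hPD, hDPD⟩ := LBD_ssp (d := d') βD μD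
    (by
      intro j hj
      have hjd : ¬ (j % 2 = d % 2) := by
        by_contra h; exact hj (by simp [hμD, h])
      simp only [hμD]
      rw [if_pos (by omega)]
    )
    (by
      intro j hj
      have hjd : ¬ (j % 2 = d % 2) := by
        by_contra h; exact hj (by simp [hμD, h])
      rw [hβD]
      simp only [if_neg hjd]
      rw [if_pos (by omega)]
      exact hab
    )
  set D : Matrix (Fin d') (Fin d') F := LBD d' βD μD with hD
  set xx : Matrix (Fin d') (Fin 1) F := Matrix.of fun i _ => c ⟨(i : ℕ), by omega⟩ with hxx
  set G : Matrix (Fin 1) (Fin 1) F := Matrix.of fun _ _ => γ with hG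
  have hGd : G * 1 = 1 * Matrix.diagonal (fun _ : Fin 1 => γ) := by
    ext i j
    fin_cases i; fin_cases j
    simp [hG]
  have hMb : SSP (Matrix.fromBlocks D xx 0 G) := by
    apply ssp_fromBlocks D G xx PD 1 (fun i : Fin d' => βD (i : ℕ)) (fun _ => γ) hPD
      isUnit_one hDPD hGd
    intro i j
    simp only [hβD]
    split_ifs
    · exact hbγ
    · exact haγ
  have hde : d' + 1 = d := by omega
  set e : Fin d' ⊕ Fin 1 ≃ Fin d := finSumFinEquiv.trans (finCongr hde) with he
  have he1 : ∀ k : Fin d', ((e (Sum.inl k)) : ℕ) = (k : ℕ) := by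
    intro k; simp [he]
  have he2 : ∀ t : Fin 1, ((e (Sum.inr t)) : ℕ) = d - 1 := by
    intro t
    simp [he, hd']
  set A : Matrix (Fin d) (Fin d) F := compMat d c - B with hA
  have hAeq : A = Matrix.reindex e e (Matrix.fromBlocks D xx 0 G) := by
    ext i j
    obtain ⟨s, rfl⟩ := e.surjective i
    obtain ⟨t, rfl⟩ := e.surjective j
    rw [Matrix.reindex_apply, Matrix.submatrix_apply, Equiv.symm_apply_apply,
      Equiv.symm_apply_apply]
    cases s with
    | inl k =>
      cases t with
      | inl l =>
        have hkv := he1 k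
        have hlv := he1 l
        have hk := k.isLt
        have hl := l.isLt
        simp only [Matrix.fromBlocks_apply₁₁, hA, Matrix.sub_apply, compMat, hB, hD, LBD,
          Matrix.of_apply, hkv, hlv, hβB, hμB, hβD, hμD]
        split_ifs <;> first | (exfalso; omega) | ring1
      | inr t' =>
        have hkv := he1 k
        have htv := he2 t'
        have hk := k.isLt
        simp only [Matrix.fromBlocks_apply₁₂, hA, Matrix.sub_apply, compMat, hB, LBD,
          Matrix.of_apply, hkv, htv, hxx, hβB, hμB]
        split_ifs <;> first | (exfalso; omega) |
          (rw [zero_add, sub_zero]; exact congrArg c (Fin.ext hkv))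
    | inr p =>
      cases t with
      | inl l =>
        have hpv := he2 p
        have hlv := he1 l
        have hl := l.isLt
        simp only [Matrix.fromBlocks_apply₂₁, hA, Matrix.sub_apply, compMat, hB, LBD,
          Matrix.of_apply, hpv, hlv, hβB, hμB, Matrix.zero_apply]
        split_ifs <;> first | (exfalso; omega) | ring1
      | inr t' =>
        have hpv := he2 p
        have htv := he2 t'
        simp only [Matrix.fromBlocks_apply₂₂, hA, Matrix.sub_apply, compMat, hB, LBD,
          Matrix.of_apply, hpv, htv, hG, hβB, hμB]
        split_ifs <;> first | (exfalso; omega) |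
          (rw [zero_add, sub_zero, hγ]; exact congrArg c (Fin.ext (he2 p)))
  refine ⟨A, B, ?_, hSSPB, ?_⟩
  · rw [hAeq]
    exact SSP.reindex e hMb
  · rw [hA, sub_add_cancel]

section Endo
variable {V : Type*} [AddCommGroup V] [Module F V]

/-- the endomorphism has a finite eigenbasis. -/
def HasEigenbasis (φ : Module.End F V) : Prop :=
  ∃ (k : ℕ) (bb : Module.Basis (Fin k) F V) (dg : Fin k → F), ∀ i, φ (bb i) = dg i • bb i

/-- sum of two endos with eigenbases. -/
def GoodEnd (φ : Module.End F V) : Prop :=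
  ∃ α β : Module.End F V, HasEigenbasis α ∧ HasEigenbasis β ∧ φ = α + β

lemma hasEigenbasis_toLin {k : ℕ} (bb : Module.Basis (Fin k) F V) {A : Matrix (Fin k) (Fin k) F}
    (h : SSP A) : HasEigenbasis (Matrix.toLin bb bb A) := by
  obtain ⟨P, dg, hP, hAP⟩ := h
  obtain ⟨u, hu⟩ := hP
  have h1 : Matrix.toLin bb bb (↑u : Matrix (Fin k) (Fin k) F) ∘ₗ
      Matrix.toLin bb bb (↑u⁻¹ : Matrix (Fin k) (Fin k) F) = LinearMap.id := by
    rw [← Matrix.toLin_mul, Units.mul_inv, Matrix.toLin_one]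
  have h2 : Matrix.toLin bb bb (↑u⁻¹ : Matrix (Fin k) (Fin k) F) ∘ₗ
      Matrix.toLin bb bb (↑u : Matrix (Fin k) (Fin k) F) = LinearMap.id := by
    rw [← Matrix.toLin_mul, Units.inv_mul, Matrix.toLin_one]
  set E : V ≃ₗ[F] V := LinearEquiv.ofLinear (Matrix.toLin bb bb (↑u : Matrix (Fin k) (Fin k) F))
    (Matrix.toLin bb bb (↑u⁻¹ : Matrix (Fin k) (Fin k) F)) h1 h2 with hE
  have hdiag : ∀ i, (Matrix.toLin bb bb (Matrix.diagonal dg)) (bb i) = dg i • bb i := by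
    intro i
    rw [Matrix.toLin_self]
    rw [Finset.sum_eq_single i]
    · rw [Matrix.diagonal_apply_eq]
    · intro j _ hji
      rw [Matrix.diagonal_apply_ne _ hji, zero_smul]
    · intro hmem
      exact absurd (Finset.mem_univ _) hmem
  refine ⟨k, bb.map E, dg, fun i => ?_⟩
  rw [Module.Basis.map_apply]
  have hEb : E (bb i) = (Matrix.toLin bb bb P) (bb i) := by rw [hE, ← hu]; rfl
  have step : (Matrix.toLin bb bb A) (E (bb i)) = (Matrix.toLin bb bb (A * P)) (bb i) := by
    rw [hEb, Matrix.toLin_mul bb bb bb, LinearMap.comp_apply]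
  rw [step, hAP, Matrix.toLin_mul bb bb bb, LinearMap.comp_apply, hdiag i, _root_.map_smul]
  rw [← hEb]

lemma ssp_of_hasEigenbasis {n : ℕ} {A : Matrix (Fin n) (Fin n) F}
    (h : HasEigenbasis (Matrix.toLin' A)) : SSP A := by
  obtain ⟨k, bb, dg, hb⟩ := h
  have ee : Fin k ≃ Fin n := bb.indexEquiv (Pi.basisFun F (Fin n))
  set b2 : Module.Basis (Fin n) F (Fin n → F) := bb.reindex ee with hb2
  set P : Matrix (Fin n) (Fin n) F := (Pi.basisFun F (Fin n)).toMatrix b2 with hPd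
  have hcol : ∀ (i' j : Fin n), P i' j = (b2 j) i' := by
    intro i' j
    rw [hPd, Module.Basis.toMatrix_apply, Pi.basisFun_repr]
  refine ⟨P, fun j => dg (ee.symm j), ?_, ?_⟩
  · have := (Pi.basisFun F (Fin n)).invertibleToMatrix b2
    exact isUnit_of_invertible P
  · ext i j
    have hmv : A.mulVec (b2 j) = dg (ee.symm j) • (b2 j) := by
      rw [← Matrix.toLin'_apply, hb2, Module.Basis.reindex_apply]
      exact hb (ee.symm j)
    rw [Matrix.mul_diagonal]
    calc (A * P) i j = (A.mulVec (b2 j)) i := by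
          simp only [Matrix.mul_apply, Matrix.mulVec, dotProduct]
          exact Finset.sum_congr rfl fun x _ => by rw [hcol x j]
    _ = dg (ee.symm j) * (b2 j) i := by rw [hmv]; rfl
    _ = P i j * dg (ee.symm j) := by rw [hcol i j]; ring

lemma HasEigenbasis.conj {W : Type*} [AddCommGroup W] [Module F W] {φ : Module.End F V}
    (h : HasEigenbasis φ) (E : V ≃ₗ[F] W) : HasEigenbasis (E.conj φ) := by
  obtain ⟨k, bb, dg, hb⟩ := h
  refine ⟨k, bb.map E, dg, fun i => ?_⟩
  rw [Module.Basis.map_apply, LinearEquiv.conj_apply_apply, LinearEquiv.symm_apply_apply, hb i,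
    _root_.map_smul, ← Module.Basis.map_apply]

lemma GoodEnd.conj {W : Type*} [AddCommGroup W] [Module F W] {φ : Module.End F V}
    (h : GoodEnd φ) (E : V ≃ₗ[F] W) : GoodEnd (E.conj φ) := by
  obtain ⟨α, β, hα, hβ, hsum⟩ := h
  exact ⟨E.conj α, E.conj β, hα.conj E, hβ.conj E, by rw [hsum, map_add]⟩

lemma goodEnd_of_subsingleton [Subsingleton V] (φ : Module.End F V) : GoodEnd φ := by
  have h0 : ∀ ψ : Module.End F V, HasEigenbasis ψ :=
    fun ψ => ⟨0, Module.Basis.empty V, 0, fun i => i.elim0⟩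
  exact ⟨0, φ, h0 0, h0 φ, (zero_add φ).symm⟩

lemma core_endo [Fintype F] (hF : 3 ≤ Fintype.card F) {d : ℕ} (bb : Module.Basis (Fin d) F V)
    (c : Fin d → F) (φ : Module.End F V)
    (hφ : ∀ j : Fin d, φ (bb j) =
      if h : (j : ℕ) + 1 < d then bb ⟨(j : ℕ) + 1, h⟩ else ∑ i, c i • bb i) :
    GoodEnd φ := by
  obtain ⟨A, B, hA, hB, hAB⟩ := core hF d c
  have hφeq : φ = Matrix.toLin bb bb (compMat d c) := by
    apply bb.ext
    intro j
    rw [Matrix.toLin_self, hφ j]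
    have hj := j.isLt
    by_cases hjd : (j : ℕ) + 1 < d
    · rw [dif_pos hjd]
      have hstep : ∀ i : Fin d, compMat d c i j • bb i =
          (if (i : ℕ) = (j : ℕ) + 1 then bb i else 0) := by
        intro i
        simp only [compMat, Matrix.of_apply]
        rw [if_neg (by omega : ¬ ((j:ℕ) = d - 1))]
        split_ifs <;> simp
      rw [Finset.sum_congr rfl fun i _ => hstep i, sum_delta ((j:ℕ)+1) (fun i => bb i),
        dif_pos hjd]
    · rw [dif_neg hjd]
      have hstep : ∀ i : Fin d, compMat d c i j • bb i = c i • bb i := by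
        intro i
        have hi := i.isLt
        simp only [compMat, Matrix.of_apply]
        rw [if_neg (by omega : ¬ ((i:ℕ) = (j:ℕ) + 1)), if_pos (by omega : (j:ℕ) = d - 1)]
        simp
      exact (Finset.sum_congr rfl fun i _ => hstep i).symm
  refine ⟨Matrix.toLin bb bb A, Matrix.toLin bb bb B, hasEigenbasis_toLin bb hA,
    hasEigenbasis_toLin bb hB, ?_⟩
  rw [hφeq, hAB, map_add]

end Endo

section SmulX
variable (W : Type*) [AddCommGroup W] [Module F W] [Module F[X] W] [IsScalarTower F F[X] W]

/-- multiplication by `X` as an `F`-linear endomorphism. -/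
noncomputable def smulX : Module.End F W where
  toFun w := (X : F[X]) • w
  map_add' := smul_add _
  map_smul' c w := by
    simp only [RingHom.id_apply]
    rw [← algebraMap_smul F[X] c w, ← algebraMap_smul F[X] c ((X : F[X]) • w),
      smul_smul, smul_smul, mul_comm]

@[simp] lemma smulX_apply (w : W) : smulX (F := F) W w = (X : F[X]) • w := rfl

end SmulX

lemma smulX_conj {W₁ W₂ : Type*} [AddCommGroup W₁] [Module F W₁] [Module F[X] W₁]
    [IsScalarTower F F[X] W₁] [AddCommGroup W₂] [Module F W₂] [Module F[X] W₂]
    [IsScalarTower F F[X] W₂] (L : W₁ ≃ₗ[F[X]] W₂) :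
    (L.restrictScalars F).conj (smulX (F := F) W₁) = smulX (F := F) W₂ := by
  ext w
  simp only [LinearEquiv.conj_apply_apply, smulX_apply, LinearEquiv.restrictScalars_apply,
    LinearEquiv.restrictScalars_symm_apply]
  rw [_root_.map_smul, LinearEquiv.apply_symm_apply]

lemma goodEnd_component [Fintype F] (hF : 3 ≤ Fintype.card F) (f : F[X]) (hf : f.Monic) :
    GoodEnd (smulX (F := F) (F[X] ⧸ (Submodule.span F[X] {f}))) := by
  set S : Submodule F[X] F[X] := Submodule.span F[X] {f} with hS
  set d : ℕ := f.natDegree with hd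
  rcases Nat.eq_zero_or_pos d with hd0 | hd1
  · have hf1 : f = 1 := by
      rw [← Polynomial.Monic.natDegree_eq_zero hf]
      omega
    have htop : S = ⊤ := by
      rw [Submodule.eq_top_iff']
      intro x
      rw [hS, hf1]
      exact Submodule.mem_span_singleton.mpr ⟨x, by simp⟩
    haveI : Subsingleton (F[X] ⧸ S) := Submodule.Quotient.subsingleton_iff.mpr htop
    exact goodEnd_of_subsingleton _
  · set mkq : F[X] →ₗ[F[X]] F[X] ⧸ S := S.mkQ with hmkq
    have hker : ∀ g : F[X], f ∣ g → mkq g = 0 := by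
      intro g ⟨q, hq⟩
      rw [hmkq, Submodule.mkQ_apply, Submodule.Quotient.mk_eq_zero]
      exact Submodule.mem_span_singleton.mpr ⟨q, by rw [smul_eq_mul, hq]; ring⟩
    set v : Fin d → F[X] ⧸ S := fun j => mkq (X ^ (j : ℕ)) with hv
    have hli : LinearIndependent F v := by
      rw [Fintype.linearIndependent_iff]
      intro g hg
      set p : F[X] := ∑ i : Fin d, Polynomial.C (g i) * X ^ (i : ℕ) with hp
      have hmkp : mkq p = ∑ i : Fin d, g i • v i := by
        rw [hp, map_sum]
        refine Finset.sum_congr rfl fun i _ => ?_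
        rw [← Polynomial.smul_eq_C_mul, LinearMap.map_smul_of_tower]
      have hp0 : mkq p = 0 := by rw [hmkp, hg]
      have hdvd : f ∣ p := by
        have hmem : p ∈ S := by
          have := hp0
          rw [hmkq, Submodule.mkQ_apply, Submodule.Quotient.mk_eq_zero] at this
          exact this
        obtain ⟨a, ha⟩ := Submodule.mem_span_singleton.mp (hS ▸ hmem)
        exact Dvd.intro_left a (by rw [← smul_eq_mul, ha])
      have hdeg : p.degree < f.degree := by
        rw [Polynomial.degree_eq_natDegree hf.ne_zero, ← hd, hp]
        exact Polynomial.degree_sum_fin_lt g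
      have hpz : p = 0 := Polynomial.eq_zero_of_dvd_of_degree_lt hdvd hdeg
      intro i
      have : p.coeff (i : ℕ) = g i := by
        rw [hp, Polynomial.finset_sum_coeff]
        have hterm : ∀ j : Fin d, (Polynomial.C (g j) * X ^ (j : ℕ)).coeff (i : ℕ) =
            if (j : ℕ) = (i : ℕ) then g j else 0 := by
          intro j
          rw [Polynomial.coeff_C_mul, Polynomial.coeff_X_pow]
          split_ifs with h1 h2 h2 <;> first | (exfalso; omega) | ring1
        rw [Finset.sum_congr rfl fun j _ => hterm j, sum_delta (i : ℕ) (fun j => g j),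
          dif_pos i.isLt]
      rw [← this, hpz, Polynomial.coeff_zero]
    have hmod : ∀ g : F[X], mkq g = mkq (g %ₘ f) := by
      intro g
      have hsub : g - g %ₘ f = f * (g /ₘ f) := by
        rw [Polynomial.modByMonic_eq_sub_mul_div g f]
        ring
      have : mkq (g - g %ₘ f) = 0 := hker _ ⟨g /ₘ f, hsub⟩
      rw [map_sub, sub_eq_zero] at this
      exact this
    have hdegmod : ∀ g : F[X], (g %ₘ f).natDegree < d := by
      intro g
      rcases eq_or_ne (g %ₘ f) 0 with h0 | h0
      · rw [h0]
        simpa using hd1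
      · rw [hd]
        exact Polynomial.natDegree_lt_natDegree h0 (Polynomial.degree_modByMonic_lt g hf)
    have hmodspan : ∀ g : F[X], g.natDegree < d →
        mkq g = ∑ i : Fin d, g.coeff (i : ℕ) • v i := by
      intro g hgd
      simp only [hv]
      conv_lhs => rw [Polynomial.as_sum_range' g d hgd]
      rw [map_sum, Fin.sum_univ_eq_sum_range (fun i => g.coeff i • mkq (X ^ i)) d]
      refine Finset.sum_congr rfl fun i _ => ?_
      rw [← Polynomial.smul_X_eq_monomial, LinearMap.map_smul_of_tower]
    have hsp : ⊤ ≤ Submodule.span F (Set.range v) := by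
      intro z _
      obtain ⟨g, rfl⟩ := Submodule.mkQ_surjective S z
      rw [← hmkq, hmod g, hmodspan _ (hdegmod g)]
      apply Submodule.sum_mem
      intro i _
      exact Submodule.smul_mem _ _ (Submodule.subset_span ⟨i, rfl⟩)
    set bb : Module.Basis (Fin d) F (F[X] ⧸ S) := Module.Basis.mk hli hsp with hbb
    apply core_endo hF bb (fun i => (X ^ d %ₘ f).coeff (i : ℕ))
    intro j
    have hbj : ∀ i : Fin d, bb i = v i := fun i => Module.Basis.mk_apply hli hsp i
    rw [hbj]
    have hstep : smulX (F := F) (F[X] ⧸ S) (v j) = mkq (X ^ ((j : ℕ) + 1)) := by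
      rw [hv]
      simp only [smulX_apply]
      rw [← LinearMap.map_smul, smul_eq_mul, ← pow_succ']
    rw [hstep]
    by_cases hj1 : (j : ℕ) + 1 < d
    · rw [dif_pos hj1]
      rw [hbj]
    · rw [dif_neg hj1]
      have hjd : (j : ℕ) + 1 = d := by have := j.isLt; omega
      rw [hjd, hmod (X ^ d), hmodspan _ (hdegmod (X ^ d))]
      refine Finset.sum_congr rfl fun i _ => by rw [hbj]

lemma goodEnd_quotient [Fintype F] (hF : 3 ≤ Fintype.card F) (g : F[X]) (hg : g ≠ 0) :
    GoodEnd (smulX (F := F) (F[X] ⧸ (Submodule.span F[X] {g}))) := by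
  set f : F[X] := g * Polynomial.C (g.leadingCoeff)⁻¹ with hfdef
  have hf : f.Monic := Polynomial.monic_mul_leadingCoeff_inv hg
  have hCunit : IsUnit (Polynomial.C (g.leadingCoeff)⁻¹) :=
    Polynomial.isUnit_C.mpr (isUnit_iff_ne_zero.mpr
      (inv_ne_zero (Polynomial.leadingCoeff_ne_zero.mpr hg)))
  have hspan : Submodule.span F[X] ({g} : Set F[X]) = Submodule.span F[X] ({f} : Set F[X]) := by
    rw [Ideal.submodule_span_eq, Ideal.submodule_span_eq,
      Ideal.span_singleton_eq_span_singleton]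
    exact ⟨hCunit.unit, by rw [IsUnit.unit_spec]⟩
  have L : (F[X] ⧸ (Submodule.span F[X] ({f} : Set F[X]))) ≃ₗ[F[X]]
      (F[X] ⧸ (Submodule.span F[X] ({g} : Set F[X]))) :=
    Submodule.quotEquivOfEq _ _ hspan.symm
  have hc := (goodEnd_component hF f hf).conj (L.restrictScalars F)
  rwa [smulX_conj L] at hc

open DirectSum in
lemma goodEnd_pi {ι : Type*} [Fintype ι] (W : ι → Type*) [∀ i, AddCommGroup (W i)]
    [∀ i, Module F (W i)] [∀ i, Module F[X] (W i)] [∀ i, IsScalarTower F F[X] (W i)]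
    (h : ∀ i, GoodEnd (smulX (F := F) (W i))) : GoodEnd (smulX (F := F) (∀ i, W i)) := by
  classical
  choose α β hα hβ hsum using h
  choose ka ba da hba using hα
  choose kb bbb db hbb using hβ
  set A : Module.End F (∀ i, W i) := LinearMap.pi (fun i => (α i).comp (LinearMap.proj i)) with hA
  set B : Module.End F (∀ i, W i) := LinearMap.pi (fun i => (β i).comp (LinearMap.proj i)) with hB
  have happA : ∀ (w : ∀ i, W i) (i : ι), A w i = α i (w i) := fun w i => rfl
  have happB : ∀ (w : ∀ i, W i) (i : ι), B w i = β i (w i) := fun w i => rfl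
  have hsingleA : ∀ (j : ι) (x : W j), A (Pi.single j x) = Pi.single j (α j x) := by
    intro j x
    funext i'
    rw [happA]
    by_cases hij : i' = j
    · subst hij; simp
    · rw [Pi.single_eq_of_ne hij, Pi.single_eq_of_ne hij, map_zero]
  have hsingleB : ∀ (j : ι) (x : W j), B (Pi.single j x) = Pi.single j (β j x) := by
    intro j x
    funext i'
    rw [happB]
    by_cases hij : i' = j
    · subst hij; simp
    · rw [Pi.single_eq_of_ne hij, Pi.single_eq_of_ne hij, map_zero]
  have heigen : ∀ (γ : Module.End F (∀ i, W i)) (k : ∀ i, ℕ)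
      (bs : ∀ i, Module.Basis (Fin (k i)) F (W i)) (ds : ∀ i, Fin (k i) → F),
      (∀ i j, γ (Pi.single i ((bs i) j)) = Pi.single i (ds i j • (bs i) j)) →
      HasEigenbasis γ := by
    intro γ k bs ds hsing
    set E := Fintype.equivFin (Σ i, Fin (k i)) with hE
    refine ⟨Fintype.card (Σ i, Fin (k i)), (Pi.basis bs).reindex E,
      fun t => ds (E.symm t).1 (E.symm t).2, fun t => ?_⟩
    rw [Module.Basis.reindex_apply, Pi.basis_apply, hsing, Pi.single_smul, ← Pi.basis_apply,
      ← Module.Basis.reindex_apply]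
  refine ⟨A, B, ?_, ?_, ?_⟩
  · refine heigen A ka ba da fun i j => ?_
    rw [hsingleA, hba i j]
  · refine heigen B kb bbb db fun i j => ?_
    rw [hsingleB, hbb i j]
  · refine LinearMap.ext fun w => funext fun i => ?_
    have h1 : smulX (F := F) (∀ i, W i) w i = smulX (F := F) (W i) (w i) := rfl
    rw [LinearMap.add_apply]
    have h2 := congrArg (fun ψ => ψ (w i)) (hsum i)
    rw [Pi.add_apply, happA, happB, h1, h2]
    rfl

lemma GoodEnd.transport {W₁ W₂ : Type*} [AddCommGroup W₁] [Module F W₁] [Module F[X] W₁]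
    [IsScalarTower F F[X] W₁] [AddCommGroup W₂] [Module F W₂] [Module F[X] W₂]
    [IsScalarTower F F[X] W₂] (L : W₁ ≃ₗ[F[X]] W₂)
    (h : GoodEnd (smulX (F := F) W₁)) : GoodEnd (smulX (F := F) W₂) := by
  have hc := h.conj (L.restrictScalars F)
  rwa [smulX_conj] at hc

lemma sum_two_ssp [Fintype F] (hF : 3 ≤ Fintype.card F) (n : ℕ)
    (M : Matrix (Fin n) (Fin n) F) :
    ∃ A B : Matrix (Fin n) (Fin n) F, SSP A ∧ SSP B ∧ M = A + B := by
  classical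
  set φ : Module.End F (Fin n → F) := Matrix.toLin' M with hφ
  have htors : Module.IsTorsion F[X] (Module.AEval' φ) := by
    intro x
    refine ⟨⟨φ.charpoly, mem_nonZeroDivisors_of_ne_zero (φ.charpoly_monic.ne_zero)⟩, ?_⟩
    obtain ⟨v, rfl⟩ := (Module.AEval'.of φ).surjective x
    show φ.charpoly • (Module.AEval'.of φ) v = 0
    rw [← Module.AEval.of_aeval_smul, LinearMap.aeval_self_charpoly]
    simp
  obtain ⟨ι, hι, p, hp, e, ⟨L⟩⟩ :=
    Module.equiv_directSum_of_isTorsion (R := F[X]) (M := Module.AEval' φ) htors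
  haveI := hι
  have hcomp : ∀ i : ι, GoodEnd (smulX (F := F) (F[X] ⧸ (F[X] ∙ (p i ^ e i)))) := fun i =>
    goodEnd_quotient hF _ (pow_ne_zero _ (hp i).ne_zero)
  have hPi : GoodEnd (smulX (F := F) (∀ i, F[X] ⧸ (F[X] ∙ (p i ^ e i)))) :=
    goodEnd_pi _ hcomp
  have hDS : GoodEnd (V := DirectSum ι (fun i => F[X] ⧸ (F[X] ∙ (p i ^ e i)))) (smulX (F := F) (DirectSum ι (fun i => F[X] ⧸ (F[X] ∙ (p i ^ e i))))) :=
    GoodEnd.transport (DirectSum.linearEquivFunOnFintype F[X] ι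
      (fun i => F[X] ⧸ (F[X] ∙ (p i ^ e i)))).symm hPi
  have hAE : GoodEnd (smulX (F := F) (Module.AEval' φ)) := GoodEnd.transport L.symm hDS
  have hGE : GoodEnd φ := by
    have hc := hAE.conj ((Module.AEval'.of φ).symm)
    have heq : ((Module.AEval'.of φ).symm).conj (smulX (F := F) (Module.AEval' φ)) = φ := by
      refine LinearMap.ext fun v => ?_
      rw [LinearEquiv.conj_apply_apply, LinearEquiv.symm_symm, smulX_apply,
        Module.AEval'.X_smul_of, LinearEquiv.symm_apply_apply]
    rwa [heq] at hc
  obtain ⟨α, β, hα, hβ, hsum⟩ := hGE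
  refine ⟨LinearMap.toMatrix' α, LinearMap.toMatrix' β, ?_, ?_, ?_⟩
  · exact ssp_of_hasEigenbasis (by rwa [Matrix.toLin'_toMatrix'])
  · exact ssp_of_hasEigenbasis (by rwa [Matrix.toLin'_toMatrix'])
  · have hM : LinearMap.toMatrix' φ = M := by rw [hφ, LinearMap.toMatrix'_toLin']
    rw [← hM, hsum, map_add]
lemma isSplitSemisimple_of_ssp {n : ℕ} {A : Matrix (Fin n) (Fin n) F} (h : SSP A) :
    IsSplitSemisimple A := by
  obtain ⟨P, dg, hP, hAP⟩ := h
  obtain ⟨u, hu⟩ := hP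
  refine ⟨u⁻¹, dg, ?_⟩
  show (↑u⁻¹ : Matrix (Fin n) (Fin n) F) * A * (↑(u⁻¹)⁻¹ : Matrix (Fin n) (Fin n) F) = Matrix.diagonal dg
  rw [inv_inv]
  calc (↑u⁻¹ : Matrix (Fin n) (Fin n) F) * A * ↑u = ↑u⁻¹ * (A * P) := by
        rw [Matrix.mul_assoc, hu]
  _ = ↑u⁻¹ * (P * Matrix.diagonal dg) := by rw [hAP]
  _ = ((↑u⁻¹ : Matrix (Fin n) (Fin n) F) * ↑u) * Matrix.diagonal dg := by
        rw [← hu, Matrix.mul_assoc]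
  _ = Matrix.diagonal dg := by rw [Units.inv_mul, Matrix.one_mul]

lemma pow_surj [Fintype F] (k : ℕ) (hk : 1 ≤ k) (hkq : Nat.gcd k (Fintype.card F - 1) = 1)
    (x : F) : ∃ y : F, y ^ k = x := by
  classical
  rcases eq_or_ne x 0 with rfl | hx
  · exact ⟨0, zero_pow (by omega)⟩
  · have hcop : (Nat.card Fˣ).Coprime k := by
      rw [Nat.card_eq_fintype_card, Fintype.card_units]
      exact Nat.coprime_comm.mp hkq
    obtain ⟨u, hu⟩ := (powCoprime hcop).surjective (Units.mk0 x hx)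
    have hu' : u ^ k = Units.mk0 x hx := hu
    refine ⟨↑u, ?_⟩
    rw [← Units.val_pow_eq_pow_val, hu', Units.val_mk0]

lemma ss_kth_root [Fintype F] {n : ℕ} (k : ℕ) (hk : 1 ≤ k)
    (hkq : Nat.gcd k (Fintype.card F - 1) = 1) {A : Matrix (Fin n) (Fin n) F}
    (h : IsSplitSemisimple A) : ∃ A₀, IsSplitSemisimple A₀ ∧ A₀ ^ k = A := by
  obtain ⟨g, dg, hg⟩ := h
  choose r hr using fun i => pow_surj k hk hkq (dg i)
  set G : Matrix (Fin n) (Fin n) F := ↑g with hG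
  set Gi : Matrix (Fin n) (Fin n) F := ↑g⁻¹ with hGi
  have hGiG : Gi * G = 1 := Units.inv_mul g
  have hGGi : G * Gi = 1 := Units.mul_inv g
  have hA : A = Gi * Matrix.diagonal dg * G := by
    rw [← hg]
    show A = Gi * (G * A * Gi) * G
    calc A = (Gi * G) * A * (Gi * G) := by rw [hGiG, Matrix.one_mul, Matrix.mul_one]
    _ = Gi * (G * A * Gi) * G := by simp only [Matrix.mul_assoc]
  refine ⟨Gi * Matrix.diagonal r * G, ⟨g, r, ?_⟩, ?_⟩
  · show G * (Gi * Matrix.diagonal r * G) * Gi = Matrix.diagonal r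
    calc G * (Gi * Matrix.diagonal r * G) * Gi
        = (G * Gi) * Matrix.diagonal r * (G * Gi) := by simp only [Matrix.mul_assoc]
    _ = Matrix.diagonal r := by rw [hGGi, Matrix.one_mul, Matrix.mul_one]
  · have hconj : ∀ m : ℕ, (Gi * Matrix.diagonal r * G) ^ m = Gi * (Matrix.diagonal r) ^ m * G := by
      intro m
      induction m with
      | zero =>
        rw [pow_zero, pow_zero, Matrix.mul_one, hGiG]
      | succ m ih =>
        have hmid : G * (Gi * (Matrix.diagonal r * G)) = Matrix.diagonal r * G := by
          rw [← Matrix.mul_assoc, hGGi, Matrix.one_mul]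
        rw [pow_succ, ih, pow_succ]
        simp only [Matrix.mul_assoc]
        rw [hmid]
    rw [hconj, Matrix.diagonal_pow, hA]
    have hrk : r ^ k = dg := funext fun i => hr i
    rw [hrk]

end SSP

theorem stmt2 (F : Type*) [Field F] [Fintype F] (hF : 3 ≤ Fintype.card F)
    (k n : ℕ) (hk : 1 ≤ k) (hn : 2 ≤ n)
    (hkq : Nat.gcd k (Fintype.card F - 1) = 1) :
    ∀ M : Matrix (Fin n) (Fin n) F, ∃ A B : Matrix (Fin n) (Fin n) F,
      IsSplitSemisimple A ∧ IsSplitSemisimple B ∧ M = A ^ k + B ^ k := by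
  intro M
  obtain ⟨A, B, hA, hB, hMAB⟩ := sum_two_ssp hF n M
  obtain ⟨A₀, hA₀, hA₀k⟩ := ss_kth_root k hk hkq (isSplitSemisimple_of_ssp hA)
  obtain ⟨B₀, hB₀, hB₀k⟩ := ss_kth_root k hk hkq (isSplitSemisimple_of_ssp hB)
  exact ⟨A₀, B₀, hA₀, hB₀, by rw [hA₀k, hB₀k, ← hMAB]⟩
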